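/- Let X and Y be finite random variables with joint distribution P_XY, where P_X(x) > 0 for all x and P_Y(y) > 0 for all y. Then for all δ ∈ (0,1), the PML envelope satisfies ε_c(δ) ≤ 𝓛(X → Y) + log(1/δ), where 𝓛(X → Y) = log Σ_{y ∈ 𝒴} max_{x ∈ 𝒳} P_{Y|X=x}(y) is the maximal leakage (log of the multiplicative Bayes capacity). -/

import Mathlib

open Real Finset
open scoped Classical

noncomputable section

/-- Marginal distribution of the first coordinate of a joint distribution. -/
def margX {X Y : Type} [Fintype Y] (P : X → Y → ℝ) (x : X) : ℝ := ∑ y, P x y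

/-- Marginal distribution of the second coordinate of a joint distribution. -/
def margY {X Y : Type} [Fintype X] (P : X → Y → ℝ) (y : Y) : ℝ := ∑ x, P x y

/-- `P` is a joint probability distribution on `X × Y`. -/
def IsJoint {X Y : Type} [Fintype X] [Fintype Y] (P : X → Y → ℝ) : Prop :=
  (∀ x y, 0 ≤ P x y) ∧ (∑ x, ∑ y, P x y) = 1

/-- Conditional probability `P_{Y|X=x}(y)` of the second coordinate given the first. -/
def condYX {X Y : Type} [Fintype Y] (P : X → Y → ℝ) (x : X) (y : Y) : ℝ :=
  P x y / margX P x

/-- Pointwise maximal leakage of the outcome `y`: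
`ℓ(X → y) = log (max_x P_{Y|X=x}(y) / P_Y(y))`. -/
def pml {X Y : Type} [Fintype X] [Fintype Y] (P : X → Y → ℝ) (y : Y) : ℝ :=
  Real.log ((⨆ x, condYX P x y) / margY P y)

/-- `K` is a Markov kernel (a conditional distribution). -/
def IsKernel {Y Z : Type} [Fintype Z] (K : Y → Z → ℝ) : Prop :=
  (∀ y z, 0 ≤ K y z) ∧ ∀ y, (∑ z, K y z) = 1

/-- Joint distribution of `(X, Z)` obtained by post-processing `Y` with the kernel `K`
(marginalizing out `Y`); this encodes the Markov chain `X - Y - Z`. -/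
def pushKernel {X Y Z : Type} [Fintype Y] (P : X → Y → ℝ) (K : Y → Z → ℝ)
    (x : X) (z : Z) : ℝ :=
  ∑ y, P x y * K y z

/-- Left-continuous quantile of the leakage random variable:
`ubar ε_Z(δ) = inf {t ≥ 0 : ℙ(ℓ(Z) ≤ t) ≥ 1 - δ}`. -/
def ubarEps {X Z : Type} [Fintype X] [Fintype Z] (Q : X → Z → ℝ) (δ : ℝ) : ℝ :=
  sInf {t : ℝ | 0 ≤ t ∧
    1 - δ ≤ ∑ z ∈ Finset.univ.filter (fun z => pml Q z ≤ t), margY Q z}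

/-- The PML envelope: the supremum of the left-continuous leakage quantile over all
finite post-processings `Z` of `Y` (i.e., over all Markov chains `X - Y - Z`). -/
def pmlEnvelope {X Y : Type} [Fintype X] [Fintype Y] (P : X → Y → ℝ) (δ : ℝ) : ℝ :=
  sSup {e : ℝ | ∃ (n : ℕ) (K : Y → Fin n → ℝ),
    IsKernel K ∧ e = ubarEps (pushKernel P K) δ}

/-- For all `δ ∈ (0,1)`, the PML envelope satisfies
`ε_c(δ) ≤ 𝓛(X → Y) + log (1/δ)`, where
`𝓛(X → Y) = log ∑_y max_x P_{Y|X=x}(y)` is the maximal leakage. -/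
theorem pmlEnvelope_le_maximal_leakage
    {X Y : Type} [Fintype X] [Fintype Y]
    (P : X → Y → ℝ) (hP : IsJoint P)
    (hPX : ∀ x, 0 < margX P x) (hPY : ∀ y, 0 < margY P y)
    (δ : ℝ) (hδ : δ ∈ Set.Ioo (0 : ℝ) 1) :
    pmlEnvelope P δ ≤ Real.log (∑ y, ⨆ x, condYX P x y) + Real.log (1 / δ) := by

  obtain ⟨hδ0, hδ1⟩ := hδ
  -- nonempty X
  haveI hXne : Nonempty X := by
    by_contra h
    rw [not_nonempty_iff] at h
    have := hP.2
    simp at this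
  -- basic facts about P
  have hcondnn : ∀ x y, 0 ≤ condYX P x y := fun x y =>
    div_nonneg (hP.1 x y) (hPX x).le
  have hbdd : ∀ y : Y, BddAbove (Set.range fun x => condYX P x y) := fun y =>
    Set.Finite.bddAbove (Set.finite_range _)
  set S : ℝ := ∑ y, ⨆ x, condYX P x y with hS
  obtain ⟨x₀⟩ := id hXne
  have hsum_cond : ∀ x, ∑ y, condYX P x y = 1 := by
    intro x
    unfold condYX
    rw [← Finset.sum_div]
    exact div_self (hPX x).ne'
  have hS1 : (1 : ℝ) ≤ S := by
    calc (1 : ℝ) = ∑ y, condYX P x₀ y := (hsum_cond x₀).symm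
    _ ≤ S := Finset.sum_le_sum fun y _ => le_ciSup (hbdd y) x₀
  have hSpos : 0 < S := lt_of_lt_of_le one_pos hS1
  set t₀ : ℝ := Real.log S + Real.log (1 / δ) with ht₀
  have h1δ : (1:ℝ) ≤ 1 / δ := by
    rw [le_div_iff₀ hδ0]; linarith
  have ht₀nn : 0 ≤ t₀ :=
    add_nonneg (Real.log_nonneg hS1) (Real.log_nonneg h1δ)
  have hexpt₀ : Real.exp t₀ = S / δ := by
    rw [ht₀, Real.exp_add, Real.exp_log hSpos, Real.exp_log (by positivity : (0:ℝ) < 1/δ)]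
    ring
  apply Real.sSup_le _ ht₀nn
  rintro e ⟨n, K, hK, rfl⟩
  set Q := pushKernel P K with hQ
  -- marginals of Q
  have hmargXQ : ∀ x, margX Q x = margX P x := by
    intro x
    simp only [hQ, margX, pushKernel]
    calc ∑ z, ∑ y, P x y * K y z = ∑ y, ∑ z, P x y * K y z := Finset.sum_comm
      _ = ∑ y, P x y * ∑ z, K y z := by simp [Finset.mul_sum]
      _ = ∑ y, P x y := by simp [hK.2]
  have hQnn : ∀ x z, 0 ≤ Q x z := fun x z =>
    Finset.sum_nonneg fun y _ => mul_nonneg (hP.1 x y) (hK.1 y z)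
  have hmYQnn : ∀ z, 0 ≤ margY Q z := fun z =>
    Finset.sum_nonneg fun x _ => hQnn x z
  have hcondQnn : ∀ x z, 0 ≤ condYX Q x z := by
    intro x z
    apply div_nonneg (hQnn x z)
    rw [hmargXQ]
    exact (hPX x).le
  have hbddQ : ∀ z : Fin n, BddAbove (Set.range fun x => condYX Q x z) := fun z =>
    Set.Finite.bddAbove (Set.finite_range _)
  have hsupQnn : ∀ z, 0 ≤ ⨆ x, condYX Q x z := fun z =>
    le_ciSup_of_le (hbddQ z) x₀ (hcondQnn x₀ z)
  -- data processing: sum of sup for Q bounded by S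
  have hcondQ : ∀ x z, condYX Q x z = ∑ y, condYX P x y * K y z := by
    intro x z
    unfold condYX
    rw [hmargXQ, hQ]
    unfold pushKernel
    rw [Finset.sum_div]
    congr 1; ext y
    rw [div_mul_eq_mul_div]
  have hDP : ∑ z, ⨆ x, condYX Q x z ≤ S := by
    have hzb : ∀ z, (⨆ x, condYX Q x z) ≤ ∑ y, (⨆ x, condYX P x y) * K y z := by
      intro z
      apply ciSup_le
      intro x
      rw [hcondQ]
      exact Finset.sum_le_sum fun y _ =>
        mul_le_mul_of_nonneg_right (le_ciSup (hbdd y) x) (hK.1 y z)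
    calc ∑ z, ⨆ x, condYX Q x z ≤ ∑ z, ∑ y, (⨆ x, condYX P x y) * K y z :=
          Finset.sum_le_sum fun z _ => hzb z
    _ = ∑ y, (⨆ x, condYX P x y) * ∑ z, K y z := by
        rw [Finset.sum_comm]; simp [Finset.mul_sum]
    _ = S := by simp [hK.2, hS]
  -- total mass of margY Q is 1
  have htotal : ∑ z, margY Q z = 1 := by
    unfold margY
    calc ∑ z, ∑ x, Q x z = ∑ x, ∑ z, Q x z := Finset.sum_comm
    _ = ∑ x, ∑ y, P x y := by
        congr 1; ext x
        calc ∑ z, Q x z = margX Q x := rfl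
        _ = margX P x := hmargXQ x
        _ = ∑ y, P x y := rfl
    _ = 1 := hP.2
  -- Markov inequality on the complement
  set B := Finset.univ.filter (fun z : Fin n => ¬ pml Q z ≤ t₀) with hB
  have hkey : ∀ z ∈ B, margY Q z * Real.exp t₀ ≤ ⨆ x, condYX Q x z := by
    intro z hz
    rw [hB, Finset.mem_filter] at hz
    have hgt : t₀ < pml Q z := lt_of_not_ge hz.2
    unfold pml at hgt
    have hratnn : 0 ≤ (⨆ x, condYX Q x z) / margY Q z :=
      div_nonneg (hsupQnn z) (hmYQnn z)
    have hratpos : 0 < (⨆ x, condYX Q x z) / margY Q z := by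
      rcases hratnn.lt_or_eq with h | h
      · exact h
      · exfalso
        rw [← h, Real.log_zero] at hgt
        linarith
    have hmpos : 0 < margY Q z := by
      rcases (hmYQnn z).lt_or_eq with h | h
      · exact h
      · exfalso; rw [← h, div_zero] at hratpos; exact lt_irrefl _ hratpos
    have hexp : Real.exp t₀ < (⨆ x, condYX Q x z) / margY Q z :=
      (Real.lt_log_iff_exp_lt hratpos).mp hgt
    nlinarith [(lt_div_iff₀ hmpos).mp hexp]
  have hBsum : ∑ z ∈ B, margY Q z ≤ δ := by
    have h1 : (∑ z ∈ B, margY Q z) * Real.exp t₀ ≤ ∑ z ∈ B, ⨆ x, condYX Q x z := by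
      rw [Finset.sum_mul]
      exact Finset.sum_le_sum hkey
    have h2 : ∑ z ∈ B, (⨆ x, condYX Q x z) ≤ ∑ z, ⨆ x, condYX Q x z :=
      Finset.sum_le_sum_of_subset_of_nonneg (Finset.subset_univ _)
        (fun z _ _ => hsupQnn z)
    have h3 : (∑ z ∈ B, margY Q z) * (S / δ) ≤ S := by
      rw [← hexpt₀]; exact le_trans h1 (le_trans h2 hDP)
    have hM0 : 0 ≤ ∑ z ∈ B, margY Q z := Finset.sum_nonneg fun z _ => hmYQnn z
    rw [← mul_div_assoc] at h3
    have h4 := (div_le_iff₀ hδ0).mp h3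
    nlinarith
  -- conclude: t₀ is in the set defining ubarEps
  unfold ubarEps
  apply csInf_le
  · exact ⟨0, fun t ht => ht.1⟩
  · refine ⟨ht₀nn, ?_⟩
    have hsplit := Finset.sum_filter_add_sum_filter_not Finset.univ
      (fun z : Fin n => pml Q z ≤ t₀) (fun z => margY Q z)
    rw [htotal] at hsplit
    have : ∑ z ∈ Finset.univ.filter (fun z => pml Q z ≤ t₀), margY Q z = 1 - ∑ z ∈ B, margY Q z := by
      rw [hB]; linarith
    rw [this]
    linarith
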